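/- For finite open covers A and B of a compact metrizable space X, D(A ∨ B) ≤ D(A) + D(B), where D(A) = min_{B' ≻ A} ord(B') over finite open covers B' refining A, and A ∨ B = {U ∩ V : U ∈ A, V ∈ B}. -/

import Mathlib

open scoped Classical

variable {Y : Type*} [TopologicalSpace Y]

/-- A finite open cover of `Y`. -/
def IsFinOpenCover {Y : Type*} [TopologicalSpace Y] (α : Finset (Set Y)) : Prop :=
  (∀ U ∈ α, IsOpen U) ∧ ∀ y : Y, ∃ U ∈ α, y ∈ U

/-- Order of a finite cover: `sup_y (#{U ∈ α | y ∈ U}) − 1`. -/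
noncomputable def coverOrd {Y : Type*} [TopologicalSpace Y] (α : Finset (Set Y)) : ℕ :=
  sSup {c : ℕ | ∃ y : Y, (α.filter (fun U => y ∈ U)).card = c} - 1

/-- `β` refines `α`: every element of `β` is contained in some element of `α`. -/
def Refines {Y : Type*} (β α : Finset (Set Y)) : Prop :=
  ∀ V ∈ β, ∃ U ∈ α, V ⊆ U

/-- `D(α)`: the minimal order of a finite open cover refining `α`. -/
noncomputable def coverD {Y : Type*} [TopologicalSpace Y] (α : Finset (Set Y)) : ℕ :=
  sInf {c : ℕ | ∃ β : Finset (Set Y), IsFinOpenCover β ∧ Refines β α ∧ coverOrd β = c}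


section AuxProof
open Finset

private lemma flat_of_no_jump {P : ℕ → ℝ} (hP : Monotone P) :
    ∀ t : ℕ, (∀ i < t, ¬ P i < P (i + 1)) → P t = P 0 := by
  intro t
  induction t with
  | zero => intro _; rfl
  | succ t ih =>
    intro h
    have h1 : P (t + 1) ≤ P t := not_lt.mp (h t (Nat.lt_succ_self t))
    have h2 := ih (fun i hi => h i (hi.trans (Nat.lt_succ_self t)))
    have h3 := hP (Nat.zero_le (t + 1))
    linarith

private lemma overlap_count {P Q : ℕ → ℝ} {p q : ℕ}
    (hP : Monotone P) (hQ : Monotone Q) (hP0 : P 0 = 0) (hQ0 : Q 0 = 0)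
    (hPp : P p = 1) (hQq : Q q = 1) :
    (((Finset.range p) ×ˢ (Finset.range q)).filter
      (fun ij => max (P ij.1) (Q ij.2) < min (P (ij.1 + 1)) (Q (ij.2 + 1)))).card
      ≤ ((Finset.range p).filter (fun i => P i < P (i + 1))).card
        + ((Finset.range q).filter (fun j => Q j < Q (j + 1))).card - 1 := by
  classical
  set F := ((Finset.range p) ×ˢ (Finset.range q)).filter
      (fun ij => max (P ij.1) (Q ij.2) < min (P (ij.1 + 1)) (Q (ij.2 + 1))) with hF
  set JP := (Finset.range p).filter (fun i => P i < P (i + 1)) with hJP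
  set JQ := (Finset.range q).filter (fun j => Q j < Q (j + 1)) with hJQ
  set f : ℕ × ℕ → ℝ := fun ij => max (P ij.1) (Q ij.2) with hf
  -- there is a jump of P with value 0
  have hPjump : ∃ i ∈ JP, P i = 0 := by
    have hne : JP.Nonempty := by
      by_contra hcon
      rw [Finset.not_nonempty_iff_eq_empty] at hcon
      have hnj : ∀ i < p, ¬ P i < P (i + 1) := by
        intro i hi hlt
        have : i ∈ JP := by rw [hJP]; exact mem_filter.mpr ⟨mem_range.mpr hi, hlt⟩
        rw [hcon] at this; exact absurd this (Finset.notMem_empty i)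
      have := flat_of_no_jump hP p hnj
      rw [hPp, hP0] at this; norm_num at this
    set i0 := JP.min' hne with hi0
    have hi0mem : i0 ∈ JP := JP.min'_mem hne
    refine ⟨i0, hi0mem, ?_⟩
    have hi0p : i0 < p := mem_range.mp (mem_filter.mp hi0mem).1
    have hnj : ∀ i < i0, ¬ P i < P (i + 1) := by
      intro i hi hlt
      have : i ∈ JP := by
        rw [hJP]; exact mem_filter.mpr ⟨mem_range.mpr (hi.trans hi0p), hlt⟩
      have := JP.min'_le i this
      omega
    have := flat_of_no_jump hP i0 hnj
    rw [this, hP0]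
  have hQjump : ∃ j ∈ JQ, Q j = 0 := by
    have hne : JQ.Nonempty := by
      by_contra hcon
      rw [Finset.not_nonempty_iff_eq_empty] at hcon
      have hnj : ∀ j < q, ¬ Q j < Q (j + 1) := by
        intro j hj hlt
        have : j ∈ JQ := by rw [hJQ]; exact mem_filter.mpr ⟨mem_range.mpr hj, hlt⟩
        rw [hcon] at this; exact absurd this (Finset.notMem_empty j)
      have := flat_of_no_jump hQ q hnj
      rw [hQq, hQ0] at this; norm_num at this
    set j0 := JQ.min' hne with hj0
    have hj0mem : j0 ∈ JQ := JQ.min'_mem hne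
    refine ⟨j0, hj0mem, ?_⟩
    have hj0q : j0 < q := mem_range.mp (mem_filter.mp hj0mem).1
    have hnj : ∀ j < j0, ¬ Q j < Q (j + 1) := by
      intro j hj hlt
      have : j ∈ JQ := by
        rw [hJQ]; exact mem_filter.mpr ⟨mem_range.mpr (hj.trans hj0q), hlt⟩
      have := JQ.min'_le j this
      omega
    have := flat_of_no_jump hQ j0 hnj
    rw [this, hQ0]
  -- injectivity of f on F, in each coordinate
  have key1 : ∀ ij ∈ F, ∀ kl ∈ F, f ij = f kl → ij.1 ≤ kl.1 := by
    rintro ⟨i, j⟩ hij ⟨k, l⟩ hkl heq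
    by_contra hik
    push_neg at hik
    have h1 : P (k + 1) ≤ P i := hP (by omega)
    have h3 : max (P i) (Q j) < min (P (i + 1)) (Q (j + 1)) := (mem_filter.mp hij).2
    have h4 : max (P k) (Q l) < min (P (k + 1)) (Q (l + 1)) := (mem_filter.mp hkl).2
    have h5 : max (P k) (Q l) < P (k + 1) := lt_of_lt_of_le h4 (min_le_left _ _)
    have h6 : P i ≤ max (P i) (Q j) := le_max_left _ _
    have h7 : max (P i) (Q j) = max (P k) (Q l) := heq
    linarith
  have key2 : ∀ ij ∈ F, ∀ kl ∈ F, f ij = f kl → ij.2 ≤ kl.2 := by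
    rintro ⟨i, j⟩ hij ⟨k, l⟩ hkl heq
    by_contra hjl
    push_neg at hjl
    have h1 : Q (l + 1) ≤ Q j := hQ (by omega)
    have h3 : max (P i) (Q j) < min (P (i + 1)) (Q (j + 1)) := (mem_filter.mp hij).2
    have h4 : max (P k) (Q l) < min (P (k + 1)) (Q (l + 1)) := (mem_filter.mp hkl).2
    have h5 : max (P k) (Q l) < Q (l + 1) := lt_of_lt_of_le h4 (min_le_right _ _)
    have h6 : Q j ≤ max (P i) (Q j) := le_max_right _ _
    have h7 : max (P i) (Q j) = max (P k) (Q l) := heq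
    linarith
  have hinj : Set.InjOn f ↑F := by
    intro ij hij kl hkl heq
    have hij' := Finset.mem_coe.mp hij
    have hkl' := Finset.mem_coe.mp hkl
    have ha := key1 ij hij' kl hkl' heq
    have hb := key1 kl hkl' ij hij' heq.symm
    have hc := key2 ij hij' kl hkl' heq
    have hd := key2 kl hkl' ij hij' heq.symm
    exact Prod.ext (le_antisymm ha hb) (le_antisymm hc hd)
  have himg : F.image f ⊆ JP.image P ∪ JQ.image Q := by
    intro t ht
    obtain ⟨⟨i, j⟩, hijF, rfl⟩ := mem_image.mp ht
    have hmem := mem_filter.mp hijF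
    have hrange := Finset.mem_product.mp hmem.1
    rcases le_total (Q j) (P i) with hc | hc
    · apply mem_union_left
      refine mem_image.mpr ⟨i, ?_, (max_eq_left hc).symm⟩
      refine mem_filter.mpr ⟨hrange.1, ?_⟩
      calc P i ≤ max (P i) (Q j) := le_max_left _ _
        _ < min (P (i + 1)) (Q (j + 1)) := hmem.2
        _ ≤ P (i + 1) := min_le_left _ _
    · apply mem_union_right
      refine mem_image.mpr ⟨j, ?_, (max_eq_right hc).symm⟩
      refine mem_filter.mpr ⟨hrange.2, ?_⟩
      calc Q j ≤ max (P i) (Q j) := le_max_right _ _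
        _ < min (P (i + 1)) (Q (j + 1)) := hmem.2
        _ ≤ Q (j + 1) := min_le_right _ _
  obtain ⟨iP, hiP, hiP0⟩ := hPjump
  obtain ⟨jQ, hjQ, hjQ0⟩ := hQjump
  have h0P : (0 : ℝ) ∈ JP.image P := mem_image.mpr ⟨iP, hiP, hiP0⟩
  have h0Q : (0 : ℝ) ∈ JQ.image Q := mem_image.mpr ⟨jQ, hjQ, hjQ0⟩
  have hinter : 1 ≤ ((JP.image P) ∩ (JQ.image Q)).card :=
    Finset.card_pos.mpr ⟨0, mem_inter.mpr ⟨h0P, h0Q⟩⟩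
  have hcard1 : F.card = (F.image f).card := (Finset.card_image_of_injOn hinj).symm
  have hcard2 : (F.image f).card ≤ (JP.image P ∪ JQ.image Q).card := Finset.card_le_card himg
  have hcard3 := Finset.card_union_add_card_inter (JP.image P) (JQ.image Q)
  have hP4 : (JP.image P).card ≤ JP.card := Finset.card_image_le
  have hQ4 : (JQ.image Q).card ≤ JQ.card := Finset.card_image_le
  omega


private lemma exists_cover_functions {Y : Type*} [TopologicalSpace Y]
    [TopologicalSpace.MetrizableSpace Y] [Nonempty Y]
    (γ : Finset (Set Y)) (hγ : IsFinOpenCover γ) :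
    ∃ (P : ℕ → Y → ℝ) (u : ℕ → Set Y),
      (∀ i, Continuous (P i)) ∧ (∀ x : Y, Monotone (fun i => P i x)) ∧
      (∀ x : Y, P 0 x = 0) ∧ (∀ x : Y, ∀ i, γ.card ≤ i → P i x = 1) ∧
      (∀ i, i < γ.card → u i ∈ γ) ∧
      (∀ i (x : Y), P i x < P (i + 1) x → x ∈ u i ∧ i < γ.card) ∧
      (∀ x : Y, ((Finset.range γ.card).filter (fun i => P i x < P (i + 1) x)).card
          = (γ.filter (fun U => x ∈ U)).card) := by
  letI : MetricSpace Y := TopologicalSpace.metrizableSpaceMetric Y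
  classical
  set p := γ.card with hp
  have hLlen : γ.toList.length = p := Finset.length_toList γ
  set u : ℕ → Set Y := fun k => γ.toList.getD k ∅ with hu
  have hudef : ∀ k (hk : k < p), u k = γ.toList.get ⟨k, by omega⟩ := by
    intro k hk
    rw [hu]
    exact List.getD_eq_get γ.toList ∅ ⟨k, by omega⟩
  have humem : ∀ k, k < p → u k ∈ γ := by
    intro k hk
    rw [hudef k hk]
    exact Finset.mem_toList.mp (γ.toList.get_mem _)
  have huinj : ∀ k, k < p → ∀ l, l < p → u k = u l → k = l := by
    intro k hk l hl hkl
    rw [hudef k hk, hudef l hl] at hkl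
    have := (List.Nodup.get_inj_iff (Finset.nodup_toList γ)).mp hkl
    exact congrArg Fin.val this
  have husurj : ∀ U ∈ γ, ∃ k, k < p ∧ u k = U := by
    intro U hU
    obtain ⟨⟨k, hk⟩, hget⟩ := List.mem_iff_get.mp (Finset.mem_toList.mpr hU)
    have hkp : k < p := by omega
    exact ⟨k, hkp, by rw [hudef k hkp]; exact hget⟩
  have hucount : ∀ x : Y, ((Finset.range p).filter (fun k => x ∈ u k)).card
      = (γ.filter (fun U => x ∈ U)).card := by
    intro x
    apply Finset.card_bij (fun k _ => u k)
    · intro k hk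
      have hk' := mem_filter.mp hk
      exact mem_filter.mpr ⟨humem k (mem_range.mp hk'.1), hk'.2⟩
    · intro k hk l hl hkl
      exact huinj k (mem_range.mp (mem_filter.mp hk).1) l (mem_range.mp (mem_filter.mp hl).1) hkl
    · intro U hU
      have hU' := mem_filter.mp hU
      obtain ⟨k, hk, hkU⟩ := husurj U hU'.1
      exact ⟨k, mem_filter.mpr ⟨mem_range.mpr hk, hkU ▸ hU'.2⟩, hkU⟩
  -- the bump functions
  set g : ℕ → Y → ℝ := fun k x =>
    if (u k)ᶜ = (∅ : Set Y) then 1 else Metric.infDist x (u k)ᶜ with hg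
  have hgcont : ∀ k, Continuous (g k) := by
    intro k
    by_cases hc : (u k)ᶜ = (∅ : Set Y)
    · simp only [hg, if_pos hc]
      exact continuous_const
    · simp only [hg, if_neg hc]
      exact Metric.continuous_infDist_pt _
  have hgnonneg : ∀ k (x : Y), 0 ≤ g k x := by
    intro k x
    by_cases hc : (u k)ᶜ = (∅ : Set Y)
    · simp only [hg, if_pos hc]; exact zero_le_one
    · simp only [hg, if_neg hc]; exact Metric.infDist_nonneg
  have hgpos : ∀ k, k < p → ∀ x : Y, (0 < g k x ↔ x ∈ u k) := by
    intro k hk x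
    by_cases hc : (u k)ᶜ = (∅ : Set Y)
    · simp only [hg, if_pos hc]
      simp [Set.compl_empty_iff.mp hc]
    · simp only [hg, if_neg hc]
      have hopen : IsOpen (u k) := hγ.1 _ (humem k hk)
      have hclosed : IsClosed ((u k)ᶜ) := hopen.isClosed_compl
      have hne : ((u k)ᶜ).Nonempty := Set.nonempty_iff_ne_empty.mpr hc
      constructor
      · intro hpos
        by_contra hx
        rw [Metric.infDist_zero_of_mem (Set.mem_compl hx)] at hpos
        exact lt_irrefl _ hpos
      · intro hx
        exact (hclosed.notMem_iff_infDist_pos hne).mp (by simpa using hx)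
  have hgzero : ∀ k, p ≤ k → ∀ x : Y, g k x = 0 := by
    intro k hk x
    have huk : u k = (∅ : Set Y) := by
      rw [hu]; exact List.getD_eq_default γ.toList ∅ (by omega)
    have hcne : ¬ ((u k)ᶜ = (∅ : Set Y)) := by
      rw [huk, Set.compl_empty]
      simp [Set.univ_eq_empty_iff, not_isEmpty_of_nonempty]
    simp only [hg, if_neg hcne, huk, Set.compl_empty]
    exact Metric.infDist_zero_of_mem (Set.mem_univ x)
  -- total sum
  set S : Y → ℝ := fun x => ∑ k ∈ Finset.range p, g k x with hS
  have hScont : Continuous S := by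
    apply continuous_finset_sum
    exact fun k _ => hgcont k
  have hSpos : ∀ x, 0 < S x := by
    intro x
    obtain ⟨U, hU, hxU⟩ := hγ.2 x
    obtain ⟨k, hk, hkU⟩ := husurj U hU
    exact Finset.sum_pos' (fun l _ => hgnonneg l x)
      ⟨k, Finset.mem_range.mpr hk, (hgpos k hk x).mpr (hkU ▸ hxU)⟩
  set P : ℕ → Y → ℝ := fun i x => (∑ k ∈ Finset.range i, g k x) / S x with hP
  have hPc : ∀ i, Continuous (P i) := by
    intro i
    exact (continuous_finset_sum _ (fun k _ => hgcont k)).div hScont (fun x => (hSpos x).ne')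
  have hPm : ∀ x : Y, Monotone (fun i => P i x) := by
    intro x i j hij
    rw [hP]; dsimp only
    rw [div_le_div_iff_of_pos_right (hSpos x)]
    exact Finset.sum_le_sum_of_subset_of_nonneg (Finset.range_subset_range.mpr hij)
      (fun k _ _ => hgnonneg k x)
  have hP0 : ∀ x : Y, P 0 x = 0 := by
    intro x; rw [hP]; simp
  have hP1 : ∀ x : Y, ∀ i, p ≤ i → P i x = 1 := by
    intro x i hi
    rw [hP]; dsimp only
    have : ∑ k ∈ Finset.range i, g k x = S x := by
      rw [hS]; dsimp only
      exact (Finset.sum_subset (Finset.range_subset_range.mpr hi)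
        (fun k _ hk => hgzero k (by simpa using hk) x)).symm
    rw [this, div_self (hSpos x).ne']
  have hPjump : ∀ i (x : Y), (P i x < P (i + 1) x ↔ 0 < g i x) := by
    intro i x
    rw [hP]; dsimp only
    rw [div_lt_div_iff_of_pos_right (hSpos x), Finset.sum_range_succ]
    exact lt_add_iff_pos_right _
  have hjump : ∀ i (x : Y), P i x < P (i + 1) x → x ∈ u i ∧ i < p := by
    intro i x h
    have hgi := (hPjump i x).mp h
    have hip : i < p := by
      by_contra hc
      rw [hgzero i (by omega) x] at hgi
      exact lt_irrefl _ hgi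
    exact ⟨(hgpos i hip x).mp hgi, hip⟩
  have hcount : ∀ x : Y, ((Finset.range p).filter (fun i => P i x < P (i + 1) x)).card
      = (γ.filter (fun U => x ∈ U)).card := by
    intro x
    rw [← hucount x]
    congr 1
    apply Finset.filter_congr
    intro k hk
    have hkp := mem_range.mp hk
    simp only [hPjump k x, hgpos k hkp x]
  exact ⟨P, u, hPc, hPm, hP0, hP1, humem, hjump, hcount⟩

private lemma exists_join_refinement {Y : Type*} [TopologicalSpace Y]
    [TopologicalSpace.MetrizableSpace Y] [Nonempty Y]
    {γ δ : Finset (Set Y)} (hγ : IsFinOpenCover γ) (hδ : IsFinOpenCover δ)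
    {m n : ℕ} (hm : ∀ x : Y, (γ.filter (fun U => x ∈ U)).card ≤ m)
    (hn : ∀ x : Y, (δ.filter (fun U => x ∈ U)).card ≤ n) :
    ∃ β : Finset (Set Y), IsFinOpenCover β ∧ Refines β γ ∧ Refines β δ ∧
      ∀ x : Y, (β.filter (fun U => x ∈ U)).card ≤ m + n - 1 := by
  classical
  obtain ⟨P, u, hPc, hPm, hP0, hP1, humem, hjump, hcount⟩ := exists_cover_functions γ hγ
  obtain ⟨Q, v, hQc, hQm, hQ0, hQ1, hvmem, hjumpQ, hcountQ⟩ := exists_cover_functions δ hδ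
  set p := γ.card with hp
  set q := δ.card with hq
  set W : ℕ → ℕ → Set Y :=
    fun i j => {x | max (P i x) (Q j x) < min (P (i + 1) x) (Q (j + 1) x)} with hW
  have hWopen : ∀ i j, IsOpen (W i j) := fun i j =>
    isOpen_lt ((hPc i).max (hQc j)) ((hPc (i + 1)).min (hQc (j + 1)))
  set β := ((Finset.range p) ×ˢ (Finset.range q)).image (fun ij => W ij.1 ij.2) with hβ
  -- coverage
  have hcover : ∀ x : Y, ∃ i, i < p ∧ ∃ j, j < q ∧ x ∈ W i j := by
    intro x
    set V : Finset ℝ := ((Finset.range (p + 1)).image (fun i => P i x))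
        ∪ ((Finset.range (q + 1)).image (fun j => Q j x)) with hV
    have hVne : ((Set.Ioo (0 : ℝ) 1) \ ↑V).Nonempty :=
      ((Set.Ioo_infinite (by norm_num)).diff V.finite_toSet).nonempty
    obtain ⟨t, ⟨ht0, ht1⟩, htV⟩ := hVne
    have hexP : ∃ i, t < P (i + 1) x := ⟨p, by rw [hP1 x (p + 1) (by omega)]; exact ht1⟩
    have hexQ : ∃ j, t < Q (j + 1) x := ⟨q, by rw [hQ1 x (q + 1) (by omega)]; exact ht1⟩
    set i0 := Nat.find hexP with hi0
    set j0 := Nat.find hexQ with hj0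
    have hspecP : t < P (i0 + 1) x := Nat.find_spec hexP
    have hspecQ : t < Q (j0 + 1) x := Nat.find_spec hexQ
    have hlowP : P i0 x ≤ t := by
      rcases Nat.eq_zero_or_pos i0 with h | h
      · rw [h, hP0 x]; exact le_of_lt ht0
      · have hmin := Nat.find_min hexP (m := i0 - 1) (by omega)
        push_neg at hmin
        have : i0 - 1 + 1 = i0 := by omega
        rwa [this] at hmin
    have hlowQ : Q j0 x ≤ t := by
      rcases Nat.eq_zero_or_pos j0 with h | h
      · rw [h, hQ0 x]; exact le_of_lt ht0
      · have hmin := Nat.find_min hexQ (m := j0 - 1) (by omega)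
        push_neg at hmin
        have : j0 - 1 + 1 = j0 := by omega
        rwa [this] at hmin
    have hi0p : i0 < p := by
      by_contra hc
      push_neg at hc
      rw [hP1 x i0 hc] at hlowP
      linarith
    have hj0q : j0 < q := by
      by_contra hc
      push_neg at hc
      rw [hQ1 x j0 hc] at hlowQ
      linarith
    have hstrP : P i0 x < t := by
      rcases lt_or_eq_of_le hlowP with h | h
      · exact h
      · exfalso
        apply htV
        rw [← h]
        apply Finset.mem_coe.mpr
        exact Finset.mem_union_left _
          (Finset.mem_image.mpr ⟨i0, Finset.mem_range.mpr (by omega), rfl⟩)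
    have hstrQ : Q j0 x < t := by
      rcases lt_or_eq_of_le hlowQ with h | h
      · exact h
      · exfalso
        apply htV
        rw [← h]
        apply Finset.mem_coe.mpr
        exact Finset.mem_union_right _
          (Finset.mem_image.mpr ⟨j0, Finset.mem_range.mpr (by omega), rfl⟩)
    refine ⟨i0, hi0p, j0, hj0q, ?_⟩
    show max (P i0 x) (Q j0 x) < min (P (i0 + 1) x) (Q (j0 + 1) x)
    exact lt_trans (max_lt hstrP hstrQ) (lt_min hspecP hspecQ)
  have hβcov : IsFinOpenCover β := by
    constructor
    · intro U hU
      obtain ⟨⟨i, j⟩, _, rfl⟩ := Finset.mem_image.mp hU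
      exact hWopen i j
    · intro x
      obtain ⟨i, hi, j, hj, hx⟩ := hcover x
      exact ⟨W i j, Finset.mem_image.mpr ⟨(i, j),
        Finset.mem_product.mpr ⟨Finset.mem_range.mpr hi, Finset.mem_range.mpr hj⟩, rfl⟩, hx⟩
  have hrefγ : Refines β γ := by
    intro U hU
    obtain ⟨⟨i, j⟩, hmem, rfl⟩ := Finset.mem_image.mp hU
    have hi : i < p := Finset.mem_range.mp (Finset.mem_product.mp hmem).1
    refine ⟨u i, humem i hi, ?_⟩
    intro x hx
    have hx' : max (P i x) (Q j x) < min (P (i + 1) x) (Q (j + 1) x) := hx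
    have : P i x < P (i + 1) x :=
      lt_of_le_of_lt (le_max_left _ _) (lt_of_lt_of_le hx' (min_le_left _ _))
    exact (hjump i x this).1
  have hrefδ : Refines β δ := by
    intro U hU
    obtain ⟨⟨i, j⟩, hmem, rfl⟩ := Finset.mem_image.mp hU
    have hj : j < q := Finset.mem_range.mp (Finset.mem_product.mp hmem).2
    refine ⟨v j, hvmem j hj, ?_⟩
    intro x hx
    have hx' : max (P i x) (Q j x) < min (P (i + 1) x) (Q (j + 1) x) := hx
    have : Q j x < Q (j + 1) x :=
      lt_of_le_of_lt (le_max_right _ _) (lt_of_lt_of_le hx' (min_le_right _ _))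
    exact (hjumpQ j x this).1
  refine ⟨β, hβcov, hrefγ, hrefδ, ?_⟩
  intro x
  set F := (((Finset.range p) ×ˢ (Finset.range q)).filter
      (fun ij => max (P ij.1 x) (Q ij.2 x) < min (P (ij.1 + 1) x) (Q (ij.2 + 1) x))) with hFdef
  have hsub : β.filter (fun U => x ∈ U) ⊆ F.image (fun ij => W ij.1 ij.2) := by
    intro U hU
    have hU' := Finset.mem_filter.mp hU
    obtain ⟨⟨i, j⟩, hmem, rfl⟩ := Finset.mem_image.mp hU'.1
    exact Finset.mem_image.mpr ⟨(i, j), Finset.mem_filter.mpr ⟨hmem, hU'.2⟩, rfl⟩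
  have hc1 : (β.filter (fun U => x ∈ U)).card ≤ F.card :=
    le_trans (Finset.card_le_card hsub) Finset.card_image_le
  have hc2 : F.card ≤ ((Finset.range p).filter (fun i => P i x < P (i + 1) x)).card
      + ((Finset.range q).filter (fun j => Q j x < Q (j + 1) x)).card - 1 :=
    overlap_count (fun i j hij => hPm x hij) (fun i j hij => hQm x hij)
      (hP0 x) (hQ0 x) (hP1 x p le_rfl) (hQ1 x q le_rfl)
  have hc3 := hcount x
  have hc4 := hcountQ x
  have hc5 := hm x
  have hc6 := hn x
  omega

theorem coverD_join_le {Y : Type*} [TopologicalSpace Y] [CompactSpace Y]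
    [TopologicalSpace.MetrizableSpace Y]
    (A B : Finset (Set Y)) (hA : IsFinOpenCover A) (hB : IsFinOpenCover B) :
    coverD (Finset.image₂ (· ∩ ·) A B) ≤ coverD A + coverD B := by
  classical
  rcases isEmpty_or_nonempty Y with hY | hY
  · -- empty space: the empty cover refines everything and has order 0
    have h0 : coverOrd (∅ : Finset (Set Y)) = 0 := by
      unfold coverOrd
      have he : {c : ℕ | ∃ y : Y, (((∅ : Finset (Set Y))).filter (fun U => y ∈ U)).card = c}
          = (∅ : Set ℕ) := by
        ext c
        simp only [Set.mem_setOf_eq, Set.mem_empty_iff_false, iff_false]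
        rintro ⟨y, -⟩
        exact (hY.false y).elim
      rw [he, csSup_empty]
      rfl
    refine le_trans (Nat.sInf_le ?_) (Nat.zero_le _)
    exact ⟨∅, ⟨fun U hU => absurd hU (Finset.notMem_empty U),
      fun y => (hY.false y).elim⟩,
      fun V hV => absurd hV (Finset.notMem_empty V), h0⟩
  · -- pick minimizing refinements of A and B
    have hmemA : coverD A ∈ {c : ℕ | ∃ β : Finset (Set Y), IsFinOpenCover β ∧
        Refines β A ∧ coverOrd β = c} :=
      Nat.sInf_mem ⟨coverOrd A, A, hA, fun U hU => ⟨U, hU, subset_rfl⟩, rfl⟩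
    have hmemB : coverD B ∈ {c : ℕ | ∃ β : Finset (Set Y), IsFinOpenCover β ∧
        Refines β B ∧ coverOrd β = c} :=
      Nat.sInf_mem ⟨coverOrd B, B, hB, fun U hU => ⟨U, hU, subset_rfl⟩, rfl⟩
    obtain ⟨γ, hγcov, hγref, hγord⟩ := hmemA
    obtain ⟨δ, hδcov, hδref, hδord⟩ := hmemB
    -- multiplicity bounds
    have hmultγ : ∀ x : Y, (γ.filter (fun U => x ∈ U)).card ≤ coverD A + 1 := by
      intro x
      have hbdd : BddAbove {c : ℕ | ∃ y : Y, (γ.filter (fun U => y ∈ U)).card = c} := by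
        refine ⟨γ.card, ?_⟩
        rintro c ⟨y, rfl⟩
        exact Finset.card_filter_le _ _
      have hle : (γ.filter (fun U => x ∈ U)).card
          ≤ sSup {c : ℕ | ∃ y : Y, (γ.filter (fun U => y ∈ U)).card = c} :=
        le_csSup hbdd ⟨x, rfl⟩
      have hpos : 1 ≤ (γ.filter (fun U => x ∈ U)).card := by
        obtain ⟨U, hU, hxU⟩ := hγcov.2 x
        exact Finset.card_pos.mpr ⟨U, Finset.mem_filter.mpr ⟨hU, hxU⟩⟩
      have hordeq : sSup {c : ℕ | ∃ y : Y, (γ.filter (fun U => y ∈ U)).card = c} - 1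
          = coverD A := hγord
      omega
    have hmultδ : ∀ x : Y, (δ.filter (fun U => x ∈ U)).card ≤ coverD B + 1 := by
      intro x
      have hbdd : BddAbove {c : ℕ | ∃ y : Y, (δ.filter (fun U => y ∈ U)).card = c} := by
        refine ⟨δ.card, ?_⟩
        rintro c ⟨y, rfl⟩
        exact Finset.card_filter_le _ _
      have hle : (δ.filter (fun U => x ∈ U)).card
          ≤ sSup {c : ℕ | ∃ y : Y, (δ.filter (fun U => y ∈ U)).card = c} :=
        le_csSup hbdd ⟨x, rfl⟩
      have hpos : 1 ≤ (δ.filter (fun U => x ∈ U)).card := by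
        obtain ⟨U, hU, hxU⟩ := hδcov.2 x
        exact Finset.card_pos.mpr ⟨U, Finset.mem_filter.mpr ⟨hU, hxU⟩⟩
      have hordeq : sSup {c : ℕ | ∃ y : Y, (δ.filter (fun U => y ∈ U)).card = c} - 1
          = coverD B := hδord
      omega
    obtain ⟨β, hβcov, hβγ, hβδ, hβmult⟩ :=
      exists_join_refinement hγcov hδcov hmultγ hmultδ
    have hrefAB : Refines β (Finset.image₂ (· ∩ ·) A B) := by
      intro W hW
      obtain ⟨G, hGγ, hWG⟩ := hβγ W hW
      obtain ⟨U, hUA, hGU⟩ := hγref G hGγ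
      obtain ⟨H, hHδ, hWH⟩ := hβδ W hW
      obtain ⟨V2, hVB, hHV⟩ := hδref H hHδ
      exact ⟨U ∩ V2, Finset.mem_image₂_of_mem hUA hVB,
        fun x hx => ⟨hGU (hWG hx), hHV (hWH hx)⟩⟩
    have hordβ : coverOrd β ≤ coverD A + coverD B := by
      have hSle : sSup {c : ℕ | ∃ y : Y, (β.filter (fun U => y ∈ U)).card = c}
          ≤ coverD A + coverD B + 1 := by
        refine csSup_le ?_ ?_
        · exact ⟨(β.filter (fun U => (Classical.arbitrary Y) ∈ U)).card,
            ⟨Classical.arbitrary Y, rfl⟩⟩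
        rintro c ⟨y, rfl⟩
        have := hβmult y
        omega
      unfold coverOrd
      omega
    calc coverD (Finset.image₂ (· ∩ ·) A B) ≤ coverOrd β :=
          Nat.sInf_le ⟨β, hβcov, hrefAB, rfl⟩
      _ ≤ coverD A + coverD B := hordβ

end AuxProof
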